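/- arXiv:2006.00191 — 2 statements merged into one kernel-verified Lean document; each statement's English description precedes it below -/
import Mathlib

section
/- Let w₂ ∈ ℂ be nonzero, θ ∈ (0, π/2), Φ := θ − arg(w₂), a ∈ ℝ, φ ∈ (0,1), and let k_R, k_I ≥ 2 with thresholds q_{R,1} < ⋯ < q_{R,k_R−1} and q_{I,1} < ⋯ < q_{I,k_I−1}. For b ∈ ℝ, let I₂(b) be the binary-input mutual information of the (k_R,k_I)-point receiver with gain w₂ and inputs x₁ = a·e^{iΦ} (probability φ) and x₂ = b·e^{iΦ} (probability 1−φ). Then I₂(b) converges, as b → ∞, to f_φ(p₂) where p₂ = Q(q_{R,k_R−1} − |w₂|·a·cos θ)·Q(q_{I,k_I−1} − |w₂|·a·sin θ). -/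
open MeasureTheory Real Filter

/-- The standard Gaussian tail function `Q(x) = ∫_x^∞ (2π)^{-1/2} e^{-u²/2} du`. -/
noncomputable def gaussQ (x : ℝ) : ℝ :=
  ∫ u in Set.Ioi x, (Real.sqrt (2 * Real.pi))⁻¹ * Real.exp (-u ^ 2 / 2)

/-- `η(t) = -t log t` (with `η(0) = 0`, automatic since `Real.log 0 = 0`). -/
noncomputable def eta (t : ℝ) : ℝ := -t * Real.log t

/-- The binary entropy function `h(p) = -p log p - (1-p) log (1-p)`. -/
noncomputable def binEnt (p : ℝ) : ℝ := eta p + eta (1 - p)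

/-- Boundary-extended Gaussian tail for a `k`-point ADC with thresholds `q`. -/
noncomputable def Qb (k : ℕ) (q : ℕ → ℝ) (t : ℝ) (l : ℕ) : ℝ :=
  if l = 0 then 1 else if l = k then 0 else gaussQ (q l - t)

/-- `p_l(t) = Q(q_{l-1} - t) - Q(q_l - t)` for the `k`-point ADC. -/
noncomputable def adcP (k : ℕ) (q : ℕ → ℝ) (t : ℝ) (l : ℕ) : ℝ :=
  Qb k q t (l - 1) - Qb k q t l

/-- Sign value of a Boolean: `true ↦ +1`, `false ↦ -1`. -/
noncomputable def sgnb (b : Bool) : ℝ := if b then 1 else -1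

/-- Transition probability of the complex Gaussian channel with gain `w` followed by
per-component one-bit ADCs: `P((s_R,s_I)|x) = Q(-s_R·Re(wx))·Q(-s_I·Im(wx))`. -/
noncomputable def p1bitC (w x : ℂ) (s : Bool × Bool) : ℝ :=
  gaussQ (-(sgnb s.1) * (w * x).re) * gaussQ (-(sgnb s.2) * (w * x).im)

/-- Binary-input mutual information of the complex Gaussian channel with gain `w`
followed by per-component one-bit ADCs, input `x₁` w.p. `φ` and `x₂` w.p. `1-φ`. -/
noncomputable def miOneBitC (w : ℂ) (φ : ℝ) (x₁ x₂ : ℂ) : ℝ :=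
  ∑ s : Bool × Bool,
    (eta (φ * p1bitC w x₁ s + (1 - φ) * p1bitC w x₂ s)
      - φ * eta (p1bitC w x₁ s) - (1 - φ) * eta (p1bitC w x₂ s))

/-- Transition probability of the complex Gaussian channel with gain `w` followed by a
`(k_R, k_I)`-point per-component receiver with thresholds `qR`, `qI`:
`P((i,l)|x) = p_{R,i}(Re(wx)) · p_{I,l}(Im(wx))`. -/
noncomputable def pADCC (w : ℂ) (kR kI : ℕ) (qR qI : ℕ → ℝ) (x : ℂ) (y : ℕ × ℕ) : ℝ :=
  adcP kR qR ((w * x).re) y.1 * adcP kI qI ((w * x).im) y.2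

/-- Binary-input mutual information of the complex Gaussian channel with gain `w`
followed by a `(k_R, k_I)`-point per-component receiver, input `x₁` w.p. `φ` and
`x₂` w.p. `1-φ`. -/
noncomputable def miADCC (w : ℂ) (kR kI : ℕ) (qR qI : ℕ → ℝ) (φ : ℝ) (x₁ x₂ : ℂ) : ℝ :=
  ∑ y ∈ Finset.Icc 1 kR ×ˢ Finset.Icc 1 kI,
    (eta (φ * pADCC w kR kI qR qI x₁ y + (1 - φ) * pADCC w kR kI qR qI x₂ y)
      - φ * eta (pADCC w kR kI qR qI x₁ y) - (1 - φ) * eta (pADCC w kR kI qR qI x₂ y))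

/-- `f_φ(p) = h(φ(1-p)) - φ·h(p)`. -/
noncomputable def fphi (φ p : ℝ) : ℝ := binEnt (φ * (1 - p)) - φ * binEnt p

lemma gauss_integrable : Integrable (fun u : ℝ => (Real.sqrt (2 * Real.pi))⁻¹ * Real.exp (-u ^ 2 / 2)) := by
  have h := (integrable_exp_neg_mul_sq (by norm_num : (0:ℝ) < 1/2)).const_mul (Real.sqrt (2 * Real.pi))⁻¹
  convert h using 2 with u
  ring_nf

lemma gauss_total : ∫ u : ℝ, (Real.sqrt (2 * Real.pi))⁻¹ * Real.exp (-u ^ 2 / 2) = 1 := by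
  rw [MeasureTheory.integral_const_mul]
  have h : ∀ u : ℝ, Real.exp (-u ^ 2 / 2) = Real.exp (-(1/2) * u ^ 2) := by
    intro u; ring_nf
  simp_rw [h]
  rw [integral_gaussian]
  rw [show (π / (1/2 : ℝ)) = 2 * π by ring]
  rw [inv_mul_cancel₀]
  positivity

lemma gaussQ_tendsto_atBot : Tendsto gaussQ atBot (nhds 1) := by
  have h1 : Tendsto (fun x : ℝ => gaussQ (-x)) atTop (nhds 1) := by
    have hm : Monotone (fun x : ℝ => Set.Ioi (-x)) := by
      intro x y hxy
      exact Set.Ioi_subset_Ioi (neg_le_neg hxy)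
    have hU : (⋃ x : ℝ, Set.Ioi (-x)) = Set.univ := by
      ext y; simp only [Set.mem_iUnion, Set.mem_Ioi, Set.mem_univ, iff_true]
      exact ⟨-(y - 1), by rw [neg_neg]; linarith⟩
    have key := tendsto_setIntegral_of_monotone (μ := volume)
      (f := fun u : ℝ => (Real.sqrt (2 * Real.pi))⁻¹ * Real.exp (-u ^ 2 / 2))
      (fun x : ℝ => measurableSet_Ioi) hm (by rw [hU]; exact gauss_integrable.integrableOn)
    rw [hU, Measure.restrict_univ, gauss_total] at key
    exact key
  have h2 := h1.comp (tendsto_neg_atBot_atTop : Tendsto (fun x : ℝ => -x) atBot atTop)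
  have : gaussQ = (fun x : ℝ => gaussQ (-x)) ∘ Neg.neg := by funext x; simp [Function.comp]
  rw [this]; exact h2


lemma continuous_eta : Continuous eta := by
  rw [show eta = Real.negMulLog from rfl]
  exact Real.continuous_negMulLog

lemma eta_mul (c x : ℝ) : eta (c * x) = c * eta x + x * eta c := by
  rw [show eta = Real.negMulLog from rfl]
  rw [Real.negMulLog_mul]; ring

@[simp] lemma eta_zero : eta 0 = 0 := by simp [eta]
@[simp] lemma eta_one : eta 1 = 0 := by simp [eta]

lemma tendsto_Qb (k : ℕ) (hk : k ≠ 0) (q : ℕ → ℝ) (c : ℝ) (hc : 0 < c) (m : ℕ) :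
    Tendsto (fun b : ℝ => Qb k q (b * c) m) atTop (nhds (if m = k then 0 else 1)) := by
  by_cases h0 : m = 0
  · subst h0
    simp only [Qb, if_pos rfl, if_neg (Ne.symm hk)]
    exact tendsto_const_nhds
  · by_cases hm : m = k
    · simp only [Qb, if_neg h0, if_pos hm, if_pos hm]
      exact tendsto_const_nhds
    · simp only [Qb, if_neg h0, if_neg hm]
      have harg : Tendsto (fun b : ℝ => q m - b * c) atTop atBot := by
        have h1 : Tendsto (fun b : ℝ => b * c) atTop atTop :=
          Tendsto.atTop_mul_const hc tendsto_id
        have h2 : Tendsto (fun b : ℝ => -(b * c)) atTop atBot :=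
          tendsto_neg_atTop_atBot.comp h1
        have h3 := tendsto_atBot_add_const_left atTop (q m) h2
        simpa [sub_eq_add_neg] using h3
      exact gaussQ_tendsto_atBot.comp harg

lemma tendsto_adcP (k : ℕ) (hk : 2 ≤ k) (q : ℕ → ℝ) (c : ℝ) (hc : 0 < c)
    (l : ℕ) (hl1 : 1 ≤ l) (hlk : l ≤ k) :
    Tendsto (fun b : ℝ => adcP k q (b * c) l) atTop (nhds (if l = k then 1 else 0)) := by
  have hk0 : k ≠ 0 := by omega
  have h1 := tendsto_Qb k hk0 q c hc (l - 1)
  have h2 := tendsto_Qb k hk0 q c hc l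
  have h3 := h1.sub h2
  have hlm : l - 1 ≠ k := by omega
  rw [if_neg hlm] at h3
  have : (1 : ℝ) - (if l = k then 0 else 1) = if l = k then 1 else 0 := by
    split <;> norm_num
  rw [this] at h3
  exact h3

lemma sum_adcP (k : ℕ) (hk : k ≠ 0) (q : ℕ → ℝ) (t : ℝ) :
    ∑ l ∈ Finset.Icc 1 k, adcP k q t l = 1 := by
  rw [← Finset.Ico_add_one_right_eq_Icc, Finset.sum_Ico_eq_sum_range]
  have h : ∀ i ∈ Finset.range (k + 1 - 1), adcP k q t (1 + i) = Qb k q t i - Qb k q t (i + 1) := by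
    intro i _
    simp only [adcP]
    congr 2 <;> omega
  rw [Finset.sum_congr rfl h]
  have hr : k + 1 - 1 = k := by omega
  rw [hr, Finset.sum_range_sub' (fun i => Qb k q t i)]
  simp [Qb, hk, Ne.symm hk]

/-- With `θ ∈ (0, π/2)`, `Φ = θ - arg w₂`, and inputs `x₁ = a·e^{iΦ}` (w.p. `φ`) and
`x₂ = b·e^{iΦ}` (w.p. `1-φ`), the binary-input mutual information `I₂(b)` of the
`(k_R,k_I)`-point receiver with gain `w₂` converges, as `b → ∞`, to `f_φ(p₂)` where
`p₂ = Q(q_{R,k_R-1} - |w₂|·a·cos θ)·Q(q_{I,k_I-1} - |w₂|·a·sin θ)`. -/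
theorem miADCC_tendsto (w₂ : ℂ) (hw₂ : w₂ ≠ 0) (θ : ℝ)
    (hθ : θ ∈ Set.Ioo (0 : ℝ) (π / 2)) (a φ : ℝ) (hφ : φ ∈ Set.Ioo (0 : ℝ) 1)
    (kR kI : ℕ) (hkR : 2 ≤ kR) (hkI : 2 ≤ kI) (qR qI : ℕ → ℝ)
    (hqR : ∀ l : ℕ, 1 ≤ l → l + 1 ≤ kR - 1 → qR l < qR (l + 1))
    (hqI : ∀ l : ℕ, 1 ≤ l → l + 1 ≤ kI - 1 → qI l < qI (l + 1)) :
    Tendsto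
      (fun b : ℝ => miADCC w₂ kR kI qR qI φ
        ((a : ℂ) * Complex.exp (((θ - Complex.arg w₂ : ℝ) : ℂ) * Complex.I))
        ((b : ℂ) * Complex.exp (((θ - Complex.arg w₂ : ℝ) : ℂ) * Complex.I)))
      atTop
      (nhds (fphi φ
        (gaussQ (qR (kR - 1) - ‖w₂‖ * a * Real.cos θ)
          * gaussQ (qI (kI - 1) - ‖w₂‖ * a * Real.sin θ)))) := by
  obtain ⟨hθ0, hθ1⟩ := hθ
  obtain ⟨hφ0, hφ1⟩ := hφ
  set r : ℝ := ‖w₂‖ with hr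
  have hrpos : 0 < r := by
    rw [hr]; exact norm_pos_iff.mpr hw₂
  have hcos : 0 < Real.cos θ := Real.cos_pos_of_mem_Ioo ⟨by linarith [Real.pi_pos], hθ1⟩
  have hsin : 0 < Real.sin θ := Real.sin_pos_of_pos_of_lt_pi hθ0 (by linarith [Real.pi_pos])
  set cR : ℝ := r * Real.cos θ with hcR
  set cI : ℝ := r * Real.sin θ with hcI
  have hcRpos : 0 < cR := mul_pos hrpos hcos
  have hcIpos : 0 < cI := mul_pos hrpos hsin
  set E : ℂ := Complex.exp (((θ - Complex.arg w₂ : ℝ) : ℂ) * Complex.I) with hEdef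
  have hwE : w₂ * E = (r : ℂ) * Complex.exp ((θ : ℝ) * Complex.I) := by
    conv_lhs => rw [← Complex.norm_mul_exp_arg_mul_I w₂]
    rw [hEdef, mul_assoc, ← Complex.exp_add, ← hr]
    congr 2
    push_cast
    ring
  have hre : ∀ b : ℝ, (w₂ * ((b : ℂ) * E)).re = b * cR := by
    intro b
    rw [show w₂ * ((b : ℂ) * E) = (b : ℂ) * (w₂ * E) by ring, hwE]
    simp [Complex.mul_re, Complex.exp_ofReal_mul_I_re, Complex.exp_ofReal_mul_I_im, hcR]
  have him : ∀ b : ℝ, (w₂ * ((b : ℂ) * E)).im = b * cI := by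
    intro b
    rw [show w₂ * ((b : ℂ) * E) = (b : ℂ) * (w₂ * E) by ring, hwE]
    simp [Complex.mul_im, Complex.exp_ofReal_mul_I_re, Complex.exp_ofReal_mul_I_im, hcI]
  -- fixed input probabilities
  set P₁ : ℕ × ℕ → ℝ := fun y => adcP kR qR (a * cR) y.1 * adcP kI qI (a * cI) y.2 with hP₁
  set grid := Finset.Icc 1 kR ×ˢ Finset.Icc 1 kI with hgrid
  set p₂ : ℝ := gaussQ (qR (kR - 1) - ‖w₂‖ * a * Real.cos θ)
      * gaussQ (qI (kI - 1) - ‖w₂‖ * a * Real.sin θ) with hp₂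
  have hkR0 : kR ≠ 0 := by omega
  have hkI0 : kI ≠ 0 := by omega
  have hP₁top : P₁ (kR, kI) = p₂ := by
    have e1 : kR - 1 ≠ 0 := by omega
    have e2 : kR - 1 ≠ kR := by omega
    have e3 : kI - 1 ≠ 0 := by omega
    have e4 : kI - 1 ≠ kI := by omega
    show adcP kR qR (a * cR) kR * adcP kI qI (a * cI) kI = p₂
    rw [hp₂, hcR, hcI, hr]
    simp only [adcP, Qb, if_neg e1, if_neg e2, if_neg e3, if_neg e4, if_neg hkR0, if_neg hkI0,
      eq_self_iff_true, if_true, sub_zero]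
    congr 1 <;> congr 1 <;> ring
  -- the limit of each summand
  set D : ℕ × ℕ → ℝ := fun y => (if y.1 = kR then (1:ℝ) else 0) * (if y.2 = kI then (1:ℝ) else 0)
    with hD
  set T : ℕ × ℕ → ℝ := fun y =>
    eta (φ * P₁ y + (1 - φ) * D y) - φ * eta (P₁ y) - (1 - φ) * eta (D y) with hT
  have hfun : ∀ b : ℝ, miADCC w₂ kR kI qR qI φ ((a : ℂ) * E) ((b : ℂ) * E)
      = ∑ y ∈ grid,
        (eta (φ * P₁ y + (1 - φ) * (adcP kR qR (b * cR) y.1 * adcP kI qI (b * cI) y.2))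
          - φ * eta (P₁ y)
          - (1 - φ) * eta (adcP kR qR (b * cR) y.1 * adcP kI qI (b * cI) y.2)) := by
    intro b
    simp only [miADCC, pADCC, hre, him, hP₁, hgrid]
  have hterm : ∀ y ∈ grid, Tendsto (fun b : ℝ =>
      eta (φ * P₁ y + (1 - φ) * (adcP kR qR (b * cR) y.1 * adcP kI qI (b * cI) y.2))
        - φ * eta (P₁ y)
        - (1 - φ) * eta (adcP kR qR (b * cR) y.1 * adcP kI qI (b * cI) y.2))
      atTop (nhds (T y)) := by
    intro y hy
    rw [hgrid, Finset.mem_product, Finset.mem_Icc, Finset.mem_Icc] at hy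
    have h1 := tendsto_adcP kR hkR qR cR hcRpos y.1 hy.1.1 hy.1.2
    have h2 := tendsto_adcP kI hkI qI cI hcIpos y.2 hy.2.1 hy.2.2
    have hprod : Tendsto (fun b : ℝ => adcP kR qR (b * cR) y.1 * adcP kI qI (b * cI) y.2)
        atTop (nhds (D y)) := by
      rw [hD]; exact h1.mul h2
    have hc1 : Tendsto (fun b : ℝ =>
        φ * P₁ y + (1 - φ) * (adcP kR qR (b * cR) y.1 * adcP kI qI (b * cI) y.2))
        atTop (nhds (φ * P₁ y + (1 - φ) * D y)) :=
      tendsto_const_nhds.add (tendsto_const_nhds.mul hprod)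
    have e1 := (continuous_eta.tendsto _).comp hc1
    have e2 := (continuous_eta.tendsto _).comp hprod
    rw [hT]
    exact (e1.sub tendsto_const_nhds).sub (tendsto_const_nhds.mul e2)
  have hsum : Tendsto (fun b : ℝ => ∑ y ∈ grid,
      (eta (φ * P₁ y + (1 - φ) * (adcP kR qR (b * cR) y.1 * adcP kI qI (b * cI) y.2))
        - φ * eta (P₁ y)
        - (1 - φ) * eta (adcP kR qR (b * cR) y.1 * adcP kI qI (b * cI) y.2)))
      atTop (nhds (∑ y ∈ grid, T y)) :=
    tendsto_finset_sum _ hterm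
  -- identify the limit
  have hL : ∑ y ∈ grid, T y = fphi φ p₂ := by
    have htop : ((kR, kI) : ℕ × ℕ) ∈ grid := by
      rw [hgrid, Finset.mem_product, Finset.mem_Icc, Finset.mem_Icc]
      omega
    rw [← Finset.sum_erase_add grid T htop]
    have hTtop : T (kR, kI) = eta (φ * p₂ + (1 - φ)) - φ * eta p₂ := by
      rw [hT, hD]
      simp [hP₁top]
    have hToff : ∀ y ∈ grid.erase (kR, kI), T y = P₁ y * eta φ := by
      intro y hy
      obtain ⟨hne, hyg⟩ := Finset.mem_erase.mp hy
      have hDy : D y = 0 := by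
        simp only [hD]
        have : y.1 ≠ kR ∨ y.2 ≠ kI := by
          by_contra h
          push_neg at h
          exact hne (Prod.ext h.1 h.2)
        rcases this with h | h
        · rw [if_neg h, zero_mul]
        · rw [if_neg h, mul_zero]
      simp only [hT, hDy, mul_zero, add_zero, eta_zero]
      rw [eta_mul]
      ring
    rw [Finset.sum_congr rfl hToff, hTtop]
    have hsumP : ∑ y ∈ grid, P₁ y = 1 := by
      rw [hgrid, hP₁, Finset.sum_product]
      simp only
      rw [← Finset.sum_mul_sum]
      rw [sum_adcP kR hkR0, sum_adcP kI hkI0, one_mul]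
    have hsumPE : ∑ y ∈ grid.erase (kR, kI), P₁ y = 1 - p₂ := by
      have := Finset.sum_erase_add grid P₁ htop
      rw [hP₁top] at this
      linarith [this, hsumP]
    rw [← Finset.sum_mul, hsumPE]
    -- now pure algebra
    rw [fphi, binEnt, binEnt]
    have h1 : eta (φ * (1 - p₂)) = φ * eta (1 - p₂) + (1 - p₂) * eta φ := eta_mul φ (1 - p₂)
    have h2 : (1 : ℝ) - φ * (1 - p₂) = φ * p₂ + (1 - φ) := by ring
    rw [h1, h2]
    ring
  rw [show (fun b : ℝ => miADCC w₂ kR kI qR qI φ ((a : ℂ) * E) ((b : ℂ) * E))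
      = (fun b : ℝ => ∑ y ∈ grid,
        (eta (φ * P₁ y + (1 - φ) * (adcP kR qR (b * cR) y.1 * adcP kI qI (b * cI) y.2))
          - φ * eta (P₁ y)
          - (1 - φ) * eta (adcP kR qR (b * cR) y.1 * adcP kI qI (b * cI) y.2)))
      from funext hfun]
  rw [← hL]
  exact hsum
end

section
/- Let w₁, w₂ be nonzero reals with |w₁| < |w₂| and let J > 0. Suppose μ* is a Borel probability measure on ℝ with ∫ x² dμ*(x) ≤ J such that R_s(μ*) ≥ R_s(μ) for every Borel probability measure μ on ℝ with ∫ x² dμ(x) ≤ J. Then μ*((−∞,0)) = 0 or μ*((0,∞)) = 0, i.e. the support of μ* is contained in [0,∞) or in (−∞,0]. (Theorem 2, case |w₁| < |w₂|.) -/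
open MeasureTheory Real Filter

/-- `I(μ, w) = h(∫ Q(w·x) dμ) - ∫ h(Q(w·x)) dμ`, the mutual information of the real
Gaussian channel `Y = sgn(w·X + N)`, `N ~ N(0,1)`, with a one-bit ADC and input `X ~ μ`. -/
noncomputable def miMeas (μ : Measure ℝ) (w : ℝ) : ℝ :=
  binEnt (∫ x, gaussQ (w * x) ∂μ) - ∫ x, binEnt (gaussQ (w * x)) ∂μ

/-- The Wyner secrecy rate `R_s(μ) = I(μ, w₁) - I(μ, w₂)`. -/
noncomputable def wynerRs (w₁ w₂ : ℝ) (μ : Measure ℝ) : ℝ := miMeas μ w₁ - miMeas μ w₂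

noncomputable def gphi (u : ℝ) : ℝ := (Real.sqrt (2 * Real.pi))⁻¹ * Real.exp (-u ^ 2 / 2)

lemma gphi_pos (u : ℝ) : 0 < gphi u := by
  apply mul_pos (inv_pos.2 (Real.sqrt_pos.2 (by positivity))) (Real.exp_pos _)

lemma integrable_gphi : Integrable gphi := by
  have : Integrable (fun u : ℝ => Real.exp (-(1/2 : ℝ) * u ^ 2)) := integrable_exp_neg_mul_sq (by norm_num)
  have h2 : (fun u : ℝ => Real.exp (-u ^ 2 / 2)) = fun u : ℝ => Real.exp (-(1/2 : ℝ) * u ^ 2) := by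
    funext u; ring_nf
  exact (h2 ▸ this).const_mul _

lemma integral_gphi : ∫ u, gphi u = 1 := by
  have h2 : (fun u : ℝ => Real.exp (-u ^ 2 / 2)) = fun u : ℝ => Real.exp (-(1/2 : ℝ) * u ^ 2) := by
    funext u; ring_nf
  have := integral_gaussian (1/2 : ℝ)
  unfold gphi
  rw [MeasureTheory.integral_const_mul]
  rw [show (fun u : ℝ => Real.exp (-u ^ 2 / 2)) = fun u : ℝ => Real.exp (-(1/2 : ℝ) * u ^ 2) from h2] at *
  rw [this]
  rw [show Real.pi / (1/2 : ℝ) = 2 * Real.pi by ring]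
  rw [inv_mul_cancel₀ (by positivity)]

lemma gaussQ_eq (x : ℝ) : gaussQ x = ∫ u in Set.Ioi x, gphi u := rfl

lemma gaussQ_antitone : Antitone gaussQ := by
  intro x y hxy
  rw [gaussQ_eq, gaussQ_eq]
  exact setIntegral_mono_set integrable_gphi.integrableOn
    (Filter.Eventually.of_forall fun u => (gphi_pos u).le)
    (HasSubset.Subset.eventuallyLE (Set.Ioi_subset_Ioi hxy))

lemma gaussQ_measurable : Measurable gaussQ := gaussQ_antitone.measurable

lemma gaussQ_pos (x : ℝ) : 0 < gaussQ x := by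
  rw [gaussQ_eq]
  rw [setIntegral_pos_iff_support_of_nonneg_ae
    (Filter.Eventually.of_forall fun u => (gphi_pos u).le) integrable_gphi.integrableOn]
  have : Function.support gphi = Set.univ := by
    ext u; simp [Function.support, (gphi_pos u).ne']
  rw [this, Set.univ_inter]
  simp [Real.volume_Ioi]

lemma gaussQ_strictAnti : StrictAnti gaussQ := by
  intro x y hxy
  rw [gaussQ_eq, gaussQ_eq]
  have hsplit : Set.Ioi x = Set.Ioc x y ∪ Set.Ioi y := (Set.Ioc_union_Ioi_eq_Ioi hxy.le).symm
  rw [hsplit, setIntegral_union (Set.Ioc_disjoint_Ioi le_rfl) measurableSet_Ioi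
    integrable_gphi.integrableOn integrable_gphi.integrableOn]
  have hpos : 0 < ∫ u in Set.Ioc x y, gphi u := by
    rw [setIntegral_pos_iff_support_of_nonneg_ae
      (Filter.Eventually.of_forall fun u => (gphi_pos u).le) integrable_gphi.integrableOn]
    have : Function.support gphi = Set.univ := by
      ext u; simp [Function.support, (gphi_pos u).ne']
    rw [this, Set.univ_inter, Real.volume_Ioc]
    simp [hxy]
  linarith

lemma gaussQ_neg (x : ℝ) : gaussQ (-x) = 1 - gaussQ x := by
  have heven : ∀ u : ℝ, gphi (-u) = gphi u := by
    intro u; unfold gphi; rw [neg_pow]; ring_nf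
  have h1 : gaussQ (-x) = ∫ u in Set.Iic x, gphi u := by
    rw [gaussQ_eq]
    rw [show (fun u => gphi u) = fun u => gphi (-u) from funext fun u => (heven u).symm]
    rw [integral_comp_neg_Ioi]
    simp [heven]
  rw [h1]
  have h2 : (∫ u in Set.Iic x, gphi u) + ∫ u in Set.Ioi x, gphi u = 1 := by
    rw [intervalIntegral.integral_Iic_add_Ioi integrable_gphi.integrableOn integrable_gphi.integrableOn, integral_gphi]
  rw [gaussQ_eq]
  linarith

lemma gaussQ_zero : gaussQ 0 = 1/2 := by
  have := gaussQ_neg 0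
  rw [neg_zero] at this
  linarith

lemma gaussQ_le_half {x : ℝ} (hx : 0 ≤ x) : gaussQ x ≤ 1/2 := by
  rw [← gaussQ_zero]; exact gaussQ_antitone hx

lemma gaussQ_lt_one (x : ℝ) : gaussQ x < 1 := by
  have := gaussQ_neg (-x)
  rw [neg_neg] at this
  have := gaussQ_pos (-x)
  linarith

lemma binEnt_eq (p : ℝ) : binEnt p = Real.binEntropy p := by
  rw [Real.binEntropy_eq_negMulLog_add_negMulLog_one_sub]
  unfold binEnt eta Real.negMulLog
  ring

lemma binEnt_symm (p : ℝ) : binEnt (1 - p) = binEnt p := by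
  rw [binEnt_eq, binEnt_eq, Real.binEntropy_one_sub]

lemma binEnt_continuous : Continuous binEnt := by
  rw [show binEnt = Real.binEntropy from funext binEnt_eq]
  exact Real.binEntropy_continuous

lemma hasDerivAt_binEnt {p : ℝ} (h0 : p ≠ 0) (h1 : p ≠ 1) :
    HasDerivAt binEnt (Real.log (1 - p) - Real.log p) p := by
  rw [show binEnt = Real.binEntropy from funext binEnt_eq]
  exact Real.hasDerivAt_binEntropy h0 h1

-- h'(p) = log(1-p) - log p is strictly decreasing on (0,1)
lemma hp_strictAnti {x y : ℝ} (hx : 0 < x) (hy : y < 1) (hxy : x < y) :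
    Real.log (1 - y) - Real.log y < Real.log (1 - x) - Real.log x := by
  have h1 : Real.log (1 - y) < Real.log (1 - x) := Real.log_lt_log (by linarith) (by linarith)
  have h2 : Real.log x < Real.log y := Real.log_lt_log hx hxy
  linarith

lemma hp_anti {x y : ℝ} (hx : 0 < x) (hy : y < 1) (hxy : x ≤ y) :
    Real.log (1 - y) - Real.log y ≤ Real.log (1 - x) - Real.log x := by
  rcases eq_or_lt_of_le hxy with rfl | h
  · exact le_rfl
  · exact (hp_strictAnti hx hy h).le

/-- Key scalar inequality. -/
lemma key_scalar (a b d e : ℝ)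
    (hb : 0 < b) (hba : b < a) (ha : a ≤ 1/2)
    (hd : 0 < d) (hde : d ≤ e)
    (hda : d ≤ 1 - 2*a) (heb : e ≤ 1 - 2*b)
    (hgap : e - d < 2*(a - b)) :
    binEnt (a + d) - binEnt a < binEnt (b + e) - binEnt b := by
  set g : ℝ → ℝ := fun s => binEnt ((a + s*(b-a)) + (d + s*(e-d))) - binEnt (a + s*(b-a)) with hg
  -- bounds along the path, for s ∈ [0,1]
  have hu : ∀ s ∈ Set.Icc (0:ℝ) 1, 0 < a + s*(b-a) ∧ a + s*(b-a) ≤ 1/2 := by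
    intro s hs
    obtain ⟨h0, h1⟩ := hs
    constructor
    · nlinarith
    · nlinarith
  have hdd : ∀ s ∈ Set.Icc (0:ℝ) 1, 0 < d + s*(e-d) := by
    intro s hs; obtain ⟨h0, h1⟩ := hs; nlinarith
  have hq1 : ∀ s ∈ Set.Icc (0:ℝ) 1,
      (a + s*(b-a)) + (d + s*(e-d)) ≤ 1 - (a + s*(b-a)) := by
    intro s hs; obtain ⟨h0, h1⟩ := hs; nlinarith
  -- derivative of g
  have hderiv : ∀ s ∈ Set.Icc (0:ℝ) 1, HasDerivAt g
      (((b-a) + (e-d)) * (Real.log (1 - ((a + s*(b-a)) + (d + s*(e-d)))) -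
        Real.log ((a + s*(b-a)) + (d + s*(e-d))))
       - (b-a) * (Real.log (1 - (a + s*(b-a))) - Real.log (a + s*(b-a)))) s := by
    intro s hs
    obtain ⟨hu0, hu1⟩ := hu s hs
    have hq0 : 0 < (a + s*(b-a)) + (d + s*(e-d)) := by
      have := hdd s hs; linarith
    have hqlt : (a + s*(b-a)) + (d + s*(e-d)) < 1 := by
      have := hq1 s hs; linarith
    have haff1 : HasDerivAt (fun s : ℝ => a + s*(b-a)) (b-a) s := by
      simpa using ((hasDerivAt_id s).mul_const (b-a)).const_add a
    have haff2 : HasDerivAt (fun s : ℝ => (a + s*(b-a)) + (d + s*(e-d))) ((b-a) + (e-d)) s := by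
      have h2 : HasDerivAt (fun s : ℝ => d + s*(e-d)) (e-d) s := by
        simpa using ((hasDerivAt_id s).mul_const (e-d)).const_add d
      exact haff1.add h2
    have hb1 := (hasDerivAt_binEnt hq0.ne' hqlt.ne).comp s haff2
    have hb2 := (hasDerivAt_binEnt hu0.ne' (by linarith : a + s*(b-a) ≠ 1)).comp s haff1
    have := hb1.sub hb2
    exact this.congr_deriv (by ring)
  -- the derivative is positive on [0,1]
  have hpos : ∀ s ∈ Set.Icc (0:ℝ) 1,
      0 < (((b-a) + (e-d)) * (Real.log (1 - ((a + s*(b-a)) + (d + s*(e-d)))) -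
        Real.log ((a + s*(b-a)) + (d + s*(e-d))))
       - (b-a) * (Real.log (1 - (a + s*(b-a))) - Real.log (a + s*(b-a)))) := by
    intro s hs
    set u := a + s*(b-a) with hu_def
    set dd := d + s*(e-d) with hdd_def
    set q := u + dd with hq_def
    obtain ⟨hu0, hu1⟩ := hu s hs
    have hdd0 : 0 < dd := hdd s hs
    have hq1' : q ≤ 1 - u := hq1 s hs
    have hq0 : 0 < q := by rw [hq_def]; linarith
    have hqlt : q < 1 := by linarith
    have huq : u < q := by rw [hq_def]; linarith
    set Hq := Real.log (1 - q) - Real.log q with hHq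
    set Hu := Real.log (1 - u) - Real.log u with hHu
    have key : ∀ _ : True, ((b-a) + (e-d)) * Hq - (b-a) * Hu
        = (a-b) * (Hu - Hq) + (e-d) * Hq := fun _ => by ring
    rw [key trivial]
    rcases le_or_gt q (1/2 : ℝ) with hhalf | hhalf
    · -- h'(q) ≥ 0
      have hHq0 : 0 ≤ Hq := by
        rw [hHq]
        have := Real.log_le_log hq0 (by linarith : q ≤ 1 - q)
        linarith
      have hstrict : Hq < Hu := hp_strictAnti hu0 hqlt huq
      have h1 : 0 < (a-b) * (Hu - Hq) := mul_pos (by linarith) (by linarith)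
      have h2 : 0 ≤ (e-d) * Hq := mul_nonneg (by linarith) hHq0
      linarith
    · -- h'(q) < 0
      have hHq0 : Hq < 0 := by
        rw [hHq]
        have := Real.log_lt_log (by linarith : (0:ℝ) < 1 - q) (by linarith : 1 - q < q)
        linarith
      have h1 : (e-d) * Hq > (2*(a-b)) * Hq := by
        apply mul_lt_mul_of_neg_right _ hHq0
        linarith
      have h2 : 0 ≤ Hu + Hq := by
        have : Real.log u ≤ Real.log (1 - q) := Real.log_le_log hu0 (by linarith)
        have : Real.log q ≤ Real.log (1 - u) := Real.log_le_log hq0 (by linarith)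
        rw [hHu, hHq]; linarith
      have : (a-b) * (Hu - Hq) + (2*(a-b)) * Hq = (a-b) * (Hu + Hq) := by ring
      nlinarith [mul_nonneg (by linarith : (0:ℝ) ≤ a - b) h2]
  -- strict monotonicity
  have hcaff1 : Continuous (fun s : ℝ => a + s*(b-a)) :=
    continuous_const.add (continuous_id.mul continuous_const)
  have hcaff2 : Continuous (fun s : ℝ => (a + s*(b-a)) + (d + s*(e-d))) :=
    hcaff1.add (continuous_const.add (continuous_id.mul continuous_const))
  have hcont : ContinuousOn g (Set.Icc 0 1) :=
    ((binEnt_continuous.comp hcaff2).sub (binEnt_continuous.comp hcaff1)).continuousOn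
  have hmono : StrictMonoOn g (Set.Icc 0 1) := by
    apply strictMonoOn_of_deriv_pos (convex_Icc 0 1) hcont
    intro s hs
    rw [interior_Icc] at hs
    have hs' : s ∈ Set.Icc (0:ℝ) 1 := ⟨hs.1.le, hs.2.le⟩
    rw [(hderiv s hs').deriv]
    exact hpos s hs'
  have := hmono (Set.left_mem_Icc.2 zero_le_one) (Set.right_mem_Icc.2 zero_le_one) zero_lt_one
  simp only [hg] at this
  rw [show a + (0:ℝ)*(b-a) = a by ring, show d + (0:ℝ)*(e-d) = d by ring,
    show a + (1:ℝ)*(b-a) = b by ring, show d + (1:ℝ)*(e-d) = e by ring] at this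
  exact this

section Meas

variable {μ : Measure ℝ}

lemma integrable_of_bounds [IsFiniteMeasure μ] {f : ℝ → ℝ} (hm : Measurable f)
    (h0 : ∀ x, 0 ≤ f x) (h1 : ∀ x, f x ≤ 1) : Integrable f μ :=
  (integrable_const (1 : ℝ)).mono' hm.aestronglyMeasurable (ae_of_all _ fun x => by
    rw [Real.norm_eq_abs, abs_of_nonneg (h0 x)]; exact h1 x)

lemma meas_gv (v : ℝ) : Measurable (fun x : ℝ => gaussQ (v * |x|)) :=
  gaussQ_measurable.comp (measurable_const.mul measurable_abs)

lemma meas_gx (v : ℝ) : Measurable (fun x : ℝ => gaussQ (v * x)) :=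
  gaussQ_measurable.comp (measurable_const.mul measurable_id)

lemma int_gv [IsFiniteMeasure μ] (v : ℝ) : Integrable (fun x : ℝ => gaussQ (v * |x|)) μ :=
  integrable_of_bounds (meas_gv v) (fun x => (gaussQ_pos _).le) (fun x => (gaussQ_lt_one _).le)

lemma int_gx [IsFiniteMeasure μ] (v : ℝ) : Integrable (fun x : ℝ => gaussQ (v * x)) μ :=
  integrable_of_bounds (meas_gx v) (fun x => (gaussQ_pos _).le) (fun x => (gaussQ_lt_one _).le)

end Meas

section Fold

variable {μ : Measure ℝ} [IsProbabilityMeasure μ]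

/-- decomposition of `gaussQ (v x)` into folded part plus indicator correction -/
lemma gaussQ_decomp (v x : ℝ) :
    gaussQ (v * x) = gaussQ (v * |x|) +
      Set.indicator (Set.Iio 0) (fun y => 1 - 2 * gaussQ (v * |y|)) x := by
  rcases le_or_gt 0 x with hx | hx
  · rw [abs_of_nonneg hx, Set.indicator_of_notMem (by simpa using hx)]; ring
  · rw [Set.indicator_of_mem (Set.mem_Iio.mpr hx), abs_of_neg hx,
      show v * -x = -(v * x) by ring, gaussQ_neg]; ring

/-- evenness of `binEnt ∘ gaussQ` -/
lemma binEnt_gaussQ_abs (w x : ℝ) : binEnt (gaussQ (w * |x|)) = binEnt (gaussQ (w * x)) := by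
  rcases le_or_gt 0 x with hx | hx
  · rw [abs_of_nonneg hx]
  · rw [abs_of_neg hx, show w * -x = -(w * x) by ring, gaussQ_neg, binEnt_symm]

/-- reduction of the sign of `w` inside `binEnt ∘ ∫` -/
lemma binEnt_int_abs_w (w : ℝ) (hw : w ≠ 0) (f : ℝ → ℝ) (hf : Measurable f) :
    binEnt (∫ x, gaussQ (w * f x) ∂μ) = binEnt (∫ x, gaussQ (|w| * f x) ∂μ) := by
  rcases abs_choice w with h | h
  · rw [h]
  · have hpt : ∀ x, gaussQ (w * f x) = 1 - gaussQ (|w| * f x) := by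
      intro x
      rw [h, show -w * f x = -(w * f x) by ring, gaussQ_neg]
      ring_nf
    simp only [hpt]
    have hint : Integrable (fun x => gaussQ (|w| * f x)) μ :=
      integrable_of_bounds (gaussQ_measurable.comp (measurable_const.mul hf))
        (fun x => (gaussQ_pos _).le) (fun x => (gaussQ_lt_one _).le)
    rw [integral_sub (integrable_const 1) hint, integral_const]
    simp [binEnt_symm]

/-- the fold strictly improves the secrecy rate -/
lemma fold_gt (w₁ w₂ : ℝ) (hw₁ : w₁ ≠ 0) (hw₂ : w₂ ≠ 0) (hlt : |w₁| < |w₂|)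
    (hneg : μ (Set.Iio 0) ≠ 0) (hpos : μ (Set.Ioi 0) ≠ 0) :
    wynerRs w₁ w₂ μ < wynerRs w₁ w₂ (Measure.map (fun x => |x|) μ) := by
  set v₁ := |w₁| with hv₁def
  set v₂ := |w₂| with hv₂def
  have hv₁ : 0 < v₁ := abs_pos.2 hw₁
  have hv₂ : 0 < v₂ := lt_trans hv₁ hlt
  set ν := Measure.map (fun x : ℝ => |x|) μ with hνdef
  have hνprob : IsProbabilityMeasure ν := Measure.isProbabilityMeasure_map measurable_abs.aemeasurable
  -- the correction integrands
  set a := ∫ x, gaussQ (v₁ * |x|) ∂μ with hadef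
  set b := ∫ x, gaussQ (v₂ * |x|) ∂μ with hbdef
  set d := ∫ x in Set.Iio 0, (1 - 2 * gaussQ (v₁ * |x|)) ∂μ with hddef
  set e := ∫ x in Set.Iio 0, (1 - 2 * gaussQ (v₂ * |x|)) ∂μ with hedef
  have hμneg : 0 < μ (Set.Iio 0) := hneg.bot_lt
  have hμpos : 0 < μ (Set.Ioi 0) := hpos.bot_lt
  -- integrability of correction terms
  have int_corr : ∀ v : ℝ, Integrable (fun x : ℝ => 1 - 2 * gaussQ (v * |x|)) μ := by
    intro v
    exact (integrable_const 1).sub ((int_gv v).const_mul 2)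
  -- basic integral identities
  have int_one : (∫ _ : ℝ, (1:ℝ) ∂μ) = 1 := by simp
  have full_int : ∀ v : ℝ, (∫ x, (1 - 2 * gaussQ (v * |x|)) ∂μ) = 1 - 2 * ∫ x, gaussQ (v * |x|) ∂μ := by
    intro v
    rw [integral_sub (integrable_const 1) ((int_gv v).const_mul 2), int_one,
      MeasureTheory.integral_const_mul]
  -- scalar hypotheses
  have supp_univ : ∀ v : ℝ, Function.support (fun x : ℝ => gaussQ (v * |x|)) = Set.univ := by
    intro v; ext x; simp [Function.mem_support, (gaussQ_pos (v * |x|)).ne']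
  have hb0 : 0 < b := by
    rw [hbdef, integral_pos_iff_support_of_nonneg (fun x => (gaussQ_pos _).le) (int_gv v₂),
      supp_univ v₂]
    simp
  have hba : b < a := by
    have hnn : (0:ℝ→ℝ) ≤ fun x => gaussQ (v₁*|x|) - gaussQ (v₂*|x|) := fun x =>
      sub_nonneg.2 (gaussQ_antitone (mul_le_mul_of_nonneg_right hlt.le (abs_nonneg x)))
    have hintd : Integrable (fun x : ℝ => gaussQ (v₁*|x|) - gaussQ (v₂*|x|)) μ :=
      (int_gv v₁).sub (int_gv v₂)
    have hsupp : Set.Ioi (0:ℝ) ⊆ Function.support (fun x => gaussQ (v₁*|x|) - gaussQ (v₂*|x|)) := by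
      intro x hx
      have hx0 : (0:ℝ) < x := hx
      have := gaussQ_strictAnti (mul_lt_mul_of_pos_right hlt (abs_pos.2 hx0.ne'))
      exact sub_ne_zero.2 (ne_of_gt this)
    have h := (integral_pos_iff_support_of_nonneg hnn hintd).2
      (lt_of_lt_of_le hμpos (measure_mono hsupp))
    rw [integral_sub (int_gv v₁) (int_gv v₂)] at h
    rw [hadef, hbdef]; linarith
  have ha2 : a ≤ 1/2 := by
    rw [hadef]
    calc ∫ x, gaussQ (v₁ * |x|) ∂μ ≤ ∫ _, (1/2:ℝ) ∂μ := by
          apply integral_mono (int_gv v₁) (integrable_const _)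
          intro x
          exact gaussQ_le_half (by positivity)
      _ = 1/2 := by simp
  have corr_nonneg : ∀ (v : ℝ), 0 < v → ∀ x : ℝ, 0 ≤ 1 - 2 * gaussQ (v * |x|) := by
    intro v hv x
    have := gaussQ_le_half (show (0:ℝ) ≤ v * |x| by positivity)
    linarith
  have hd0 : 0 < d := by
    rw [hddef, setIntegral_pos_iff_support_of_nonneg_ae
      (ae_of_all _ (corr_nonneg v₁ hv₁)) ((int_corr v₁).integrableOn)]
    refine lt_of_lt_of_le hμneg (measure_mono ?_)
    intro x hx
    have hx0 : x < 0 := hx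
    refine ⟨?_, hx⟩
    have h1 : (0:ℝ) < v₁ * |x| := mul_pos hv₁ (abs_pos.2 hx0.ne)
    have h2 := gaussQ_strictAnti h1
    rw [gaussQ_zero] at h2
    simp only [Function.mem_support]
    intro hc
    linarith
  have hde : d ≤ e := by
    rw [hddef, hedef]
    apply setIntegral_mono_on ((int_corr v₁).integrableOn) ((int_corr v₂).integrableOn)
      measurableSet_Iio
    intro x _
    have := gaussQ_antitone (mul_le_mul_of_nonneg_right hlt.le (abs_nonneg x))
    linarith
  have hda : d ≤ 1 - 2*a := by
    rw [hddef, hadef, ← full_int v₁]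
    exact setIntegral_le_integral (int_corr v₁) (ae_of_all _ (corr_nonneg v₁ hv₁))
  have heb : e ≤ 1 - 2*b := by
    rw [hedef, hbdef, ← full_int v₂]
    exact setIntegral_le_integral (int_corr v₂) (ae_of_all _ (corr_nonneg v₂ hv₂))
  have hgap : e - d < 2*(a - b) := by
    have hF : Integrable (fun x : ℝ => 2*(gaussQ (v₁*|x|) - gaussQ (v₂*|x|))) μ :=
      ((int_gv v₁).sub (int_gv v₂)).const_mul 2
    have hsplit := integral_add_compl (measurableSet_Iio : MeasurableSet (Set.Iio (0:ℝ))) hF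
    have h2ab : 2*(a-b) = ∫ x, 2*(gaussQ (v₁*|x|) - gaussQ (v₂*|x|)) ∂μ := by
      rw [MeasureTheory.integral_const_mul, integral_sub (int_gv v₁) (int_gv v₂), hadef, hbdef]
    have hed : e - d = ∫ x in Set.Iio 0, 2*(gaussQ (v₁*|x|) - gaussQ (v₂*|x|)) ∂μ := by
      have hpt : ∀ x : ℝ, 2*(gaussQ (v₁*|x|) - gaussQ (v₂*|x|))
          = (1 - 2*gaussQ (v₂*|x|)) - (1 - 2*gaussQ (v₁*|x|)) := fun x => by ring
      rw [integral_congr_ae (ae_of_all _ hpt),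
        integral_sub ((int_corr v₂).integrableOn) ((int_corr v₁).integrableOn),
        ← hedef, ← hddef]
    have hcomp : 0 < ∫ x in (Set.Iio (0:ℝ))ᶜ, 2*(gaussQ (v₁*|x|) - gaussQ (v₂*|x|)) ∂μ := by
      rw [setIntegral_pos_iff_support_of_nonneg_ae (ae_of_all _ fun x => by
          have := gaussQ_antitone (mul_le_mul_of_nonneg_right hlt.le (abs_nonneg x))
          simp only [Pi.zero_apply]; linarith) hF.integrableOn]
      refine lt_of_lt_of_le hμpos (measure_mono ?_)
      intro x hx
      have hx0 : (0:ℝ) < x := hx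
      constructor
      · have := gaussQ_strictAnti (mul_lt_mul_of_pos_right hlt (abs_pos.2 hx0.ne'))
        simp only [Function.mem_support]
        intro hc
        nlinarith
      · simp only [Set.mem_compl_iff, Set.mem_Iio, not_lt]
        exact hx0.le
    linarith
  -- decomposition q = q' + D
  have qdecomp : ∀ v : ℝ, (∫ x, gaussQ (v * x) ∂μ)
      = (∫ x, gaussQ (v * |x|) ∂μ) + ∫ x in Set.Iio 0, (1 - 2 * gaussQ (v * |x|)) ∂μ := by
    intro v
    have hi : Integrable (Set.indicator (Set.Iio 0) (fun y : ℝ => 1 - 2 * gaussQ (v * |y|))) μ :=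
      (int_corr v).indicator measurableSet_Iio
    rw [integral_congr_ae (ae_of_all _ (gaussQ_decomp v)),
      integral_add (int_gv v) hi, integral_indicator measurableSet_Iio]
  -- transfer to ν
  have hmapint : ∀ f : ℝ → ℝ, Measurable f → (∫ y, f y ∂ν) = ∫ x, f |x| ∂μ := by
    intro f hf
    rw [hνdef, integral_map measurable_abs.aemeasurable hf.aestronglyMeasurable]
  have hBterm : ∀ w : ℝ, (∫ x, binEnt (gaussQ (w * x)) ∂ν) = ∫ x, binEnt (gaussQ (w * x)) ∂μ := by
    intro w
    rw [hmapint (fun x => binEnt (gaussQ (w * x))) (binEnt_continuous.measurable.comp (meas_gx w))]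
    exact integral_congr_ae (ae_of_all _ fun x => binEnt_gaussQ_abs w x)
  have hQν : ∀ w : ℝ, w ≠ 0 → binEnt (∫ x, gaussQ (w * x) ∂ν) = binEnt (∫ x, gaussQ (|w| * |x|) ∂μ) := by
    intro w hw
    rw [hmapint (fun x => gaussQ (w * x)) (meas_gx w)]
    exact binEnt_int_abs_w w hw _ measurable_abs
  have hQμ : ∀ w : ℝ, w ≠ 0 → binEnt (∫ x, gaussQ (w * x) ∂μ) = binEnt (∫ x, gaussQ (|w| * x) ∂μ) :=
    fun w hw => binEnt_int_abs_w w hw _ measurable_id'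
  -- final assembly
  have key := key_scalar a b d e hb0 hba ha2 hd0 hde hda heb hgap
  have hq1 : binEnt (∫ x, gaussQ (w₁ * x) ∂μ) = binEnt (a + d) := by
    rw [hQμ w₁ hw₁, ← hv₁def, qdecomp v₁, ← hadef, ← hddef]
  have hq2 : binEnt (∫ x, gaussQ (w₂ * x) ∂μ) = binEnt (b + e) := by
    rw [hQμ w₂ hw₂, ← hv₂def, qdecomp v₂, ← hbdef, ← hedef]
  have hq1' : binEnt (∫ x, gaussQ (w₁ * x) ∂ν) = binEnt a := by
    rw [hQν w₁ hw₁, ← hv₁def, ← hadef]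
  have hq2' : binEnt (∫ x, gaussQ (w₂ * x) ∂ν) = binEnt b := by
    rw [hQν w₂ hw₂, ← hv₂def, ← hbdef]
  show wynerRs w₁ w₂ μ < wynerRs w₁ w₂ ν
  unfold wynerRs miMeas
  rw [hBterm w₁, hBterm w₂, hq1, hq2, hq1', hq2']
  linarith

end Fold


/-- Theorem 2, case `|w₁| < |w₂|`: any maximizer `μ*` of the Wyner secrecy rate under
the power constraint `∫ x² dμ ≤ J` has support contained in `[0,∞)` or in `(-∞,0]`. -/
theorem optimal_support_lt (w₁ w₂ : ℝ) (hw₁ : w₁ ≠ 0) (hw₂ : w₂ ≠ 0)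
    (hlt : |w₁| < |w₂|) (J : ℝ) (hJ : 0 < J)
    (μs : Measure ℝ) [IsProbabilityMeasure μs]
    (hint : Integrable (fun x : ℝ => x ^ 2) μs)
    (hpow : (∫ x, x ^ 2 ∂μs) ≤ J)
    (hopt : ∀ μ : Measure ℝ, IsProbabilityMeasure μ →
      Integrable (fun x : ℝ => x ^ 2) μ → (∫ x, x ^ 2 ∂μ) ≤ J →
      wynerRs w₁ w₂ μ ≤ wynerRs w₁ w₂ μs) :
    μs (Set.Iio 0) = 0 ∨ μs (Set.Ioi 0) = 0 := by
  by_contra hcon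
  push_neg at hcon
  obtain ⟨hneg, hpos⟩ := hcon
  have hνprob : IsProbabilityMeasure (Measure.map (fun x : ℝ => |x|) μs) :=
    Measure.isProbabilityMeasure_map measurable_abs.aemeasurable
  have hintν : Integrable (fun x : ℝ => x ^ 2) (Measure.map (fun x : ℝ => |x|) μs) := by
    rw [integrable_map_measure (g := fun x : ℝ => x ^ 2) (f := fun x : ℝ => |x|)
      (by fun_prop) measurable_abs.aemeasurable]
    have : ((fun x : ℝ => x ^ 2) ∘ fun x : ℝ => |x|) = fun x : ℝ => x ^ 2 := by
      funext x; simp [Function.comp, sq_abs]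
    rw [this]
    exact hint
  have hpowν : (∫ x, x ^ 2 ∂(Measure.map (fun x : ℝ => |x|) μs)) ≤ J := by
    rw [integral_map (φ := fun x : ℝ => |x|) (f := fun x : ℝ => x ^ 2)
      measurable_abs.aemeasurable (by fun_prop)]
    calc (∫ x, |x| ^ 2 ∂μs) = ∫ x, x ^ 2 ∂μs := by
          apply integral_congr_ae (ae_of_all _ fun x => sq_abs x)
      _ ≤ J := hpow
  have h1 := hopt (Measure.map (fun x : ℝ => |x|) μs) hνprob hintν hpowν
  have h2 := fold_gt w₁ w₂ hw₁ hw₂ hlt hneg hpos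
  exact absurd h1 (not_le.2 h2)
end
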